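/- Let m ≥ 1 and let f be a real-valued function on the set of admissible words of length 2m such that: f(t) ≥ 0 for every admissible t; f is invariant under rotation (f(t ∘ (· + r)) = f(t) for all r ∈ ZMod 2m); and 2·f(t) ≥ f(d₁(t)) + f(d₂(t)) for every admissible word t. Then for every admissible word t, one has 2m · f(t) ≥ Σ_{i ∈ ZMod 2m} q_i(t) · f(c_i), where q_i(t) is the number of k ∈ ZMod 2m with t(k) = i. -/

import Mathlib

/-- A word of length `2*m`: a cyclic sequence of letter indices. -/
abbrev Word (m : ℕ) := ZMod (2*m) → ZMod (2*m)

/-- Rotation of a word by `r`. -/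
def rot (m : ℕ) (t : Word m) (r : ZMod (2*m)) : Word m := fun k => t (k + r)

/-- `ε` is a decoration of the word `t`. -/
def IsDecoration (m : ℕ) (t : Word m) (ε : ZMod (2*m) → ℤ) : Prop :=
  (∀ k, ε k = 1 ∨ ε k = -1) ∧
  (∀ k, ε k = 1 → ε (k+1) = 1 → t (k+1) = t k + 1) ∧
  (∀ k, ε k = -1 → ε (k+1) = -1 → t (k+1) = t k - 1) ∧
  (∀ k, ε k ≠ ε (k+1) → t (k+1) = t k)

/-- A word is admissible if it admits a decoration. -/
def Admissible (m : ℕ) (t : Word m) : Prop := ∃ ε, IsDecoration m t ε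

/-- First half-double: `d₁(t)(k) = t(k)` for `0 ≤ k ≤ m-1`, and
`d₁(t)(k) = t(2m-1-k)` for `m ≤ k ≤ 2m-1`. -/
def d1 (m : ℕ) (t : Word m) : Word m := fun k =>
  if k.val < m then t k else t ((2*m - 1 - k.val : ℕ) : ZMod (2*m))

/-- Second half-double: `d₂(t) = d₁(rotation of t by m)`. -/
def d2 (m : ℕ) (t : Word m) : Word m := d1 m (rot m t (m : ZMod (2*m)))

/-- `q m t i` is the number of `k` with `t k = i`. -/
def q (m : ℕ) [NeZero (2*m)] (t : Word m) (i : ZMod (2*m)) : ℕ :=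
  (Finset.univ.filter fun k => t k = i).card

section Aux

open Finset

variable {m : ℕ}

lemma two_mul_pos [NeZero (2*m)] : 0 < 2*m := Nat.pos_of_ne_zero (NeZero.ne _)

lemma cast_val_eq [NeZero (2*m)] (k : ZMod (2*m)) : ((k.val : ℕ) : ZMod (2*m)) = k :=
  ZMod.natCast_zmod_val k

lemma val_succ_of_lt [NeZero (2*m)] {k : ZMod (2*m)} (h : k.val + 1 < 2*m) :
    (k + 1).val = k.val + 1 := by
  conv_lhs => rw [← cast_val_eq k]
  rw [← Nat.cast_one, ← Nat.cast_add, ZMod.val_natCast_of_lt h]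

lemma succ_eq_zero [NeZero (2*m)] {k : ZMod (2*m)} (h : k.val = 2*m - 1) : k + 1 = 0 := by
  have h0 : 0 < 2*m := two_mul_pos
  conv_lhs => rw [← cast_val_eq k]
  rw [h]
  rw [show ((2*m - 1 : ℕ) : ZMod (2*m)) + 1 = (((2*m - 1) + 1 : ℕ) : ZMod (2*m)) from
    (Nat.cast_succ _).symm]
  rw [show (2*m - 1) + 1 = 2*m by omega, ZMod.natCast_self]

lemma d1_apply_lt {t : Word m} {k : ZMod (2*m)} (h : k.val < m) : d1 m t k = t k := by
  simp only [d1]; rw [if_pos h]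

lemma d1_apply_ge {t : Word m} {k : ZMod (2*m)} (h : ¬ k.val < m) :
    d1 m t k = t ((2*m - 1 - k.val : ℕ) : ZMod (2*m)) := by
  simp only [d1]; rw [if_neg h]

lemma rot_admissible [NeZero (2*m)] {t : Word m} (ht : Admissible m t) (r : ZMod (2*m)) :
    Admissible m (rot m t r) := by
  obtain ⟨ε, h1, h2, h3, h4⟩ := ht
  refine ⟨fun k => ε (k + r), fun k => h1 _, ?_, ?_, ?_⟩
  · intro k p q
    have hc : k + 1 + r = k + r + 1 := by ring
    have q' : ε (k + r + 1) = 1 := by rw [← hc]; exact q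
    show t (k + 1 + r) = t (k + r) + 1
    rw [hc]; exact h2 (k + r) p q'
  · intro k p q
    have hc : k + 1 + r = k + r + 1 := by ring
    have q' : ε (k + r + 1) = -1 := by rw [← hc]; exact q
    show t (k + 1 + r) = t (k + r) - 1
    rw [hc]; exact h3 (k + r) p q'
  · intro k p
    have hc : k + 1 + r = k + r + 1 := by ring
    have p' : ε (k + r) ≠ ε (k + r + 1) := by rw [← hc]; exact p
    show t (k + 1 + r) = t (k + r)
    rw [hc]; exact h4 (k + r) p'

lemma d1_admissible (hm : 1 ≤ m) [NeZero (2*m)] {t : Word m} (ht : Admissible m t) :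
    Admissible m (d1 m t) := by
  obtain ⟨ε, h1, h2, h3, h4⟩ := ht
  set ε' : ZMod (2*m) → ℤ :=
    fun k => if k.val < m then ε k else -ε ((2*m - 1 - k.val : ℕ) : ZMod (2*m)) with hε'
  have hval : ∀ k : ZMod (2*m), ε' k = 1 ∨ ε' k = -1 := by
    intro k; simp only [hε']; split_ifs
    · exact h1 k
    · rcases h1 ((2*m - 1 - k.val : ℕ) : ZMod (2*m)) with h | h <;> rw [h] <;> omega
  have main : ∀ k : ZMod (2*m),
      (ε' k = 1 → ε' (k+1) = 1 → d1 m t (k+1) = d1 m t k + 1) ∧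
      (ε' k = -1 → ε' (k+1) = -1 → d1 m t (k+1) = d1 m t k - 1) ∧
      (ε' k ≠ ε' (k+1) → d1 m t (k+1) = d1 m t k) := by
    intro k
    have hkv : k.val < 2*m := ZMod.val_lt k
    by_cases hA : k.val + 1 < m
    · have hklt : k.val < m := by omega
      have hk1 : (k+1).val = k.val + 1 := val_succ_of_lt (by omega)
      have e1 : ε' k = ε k := by simp only [hε']; rw [if_pos hklt]
      have e2 : ε' (k+1) = ε (k+1) := by simp only [hε']; rw [if_pos (by omega : (k+1).val < m)]
      have dk : d1 m t k = t k := d1_apply_lt hklt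
      have dk1 : d1 m t (k+1) = t (k+1) := d1_apply_lt (by omega)
      rw [e1, e2, dk, dk1]
      exact ⟨h2 k, h3 k, h4 k⟩
    · by_cases hB : k.val + 1 = m
      · have hklt : k.val < m := by omega
        have hk1 : (k+1).val = m := by rw [val_succ_of_lt (by omega)]; omega
        have hnlt : ¬ (k+1).val < m := by omega
        have hcast : ((2*m - 1 - (k+1).val : ℕ) : ZMod (2*m)) = k := by
          rw [hk1, show 2*m - 1 - m = k.val by omega, cast_val_eq]
        have e1 : ε' k = ε k := by simp only [hε']; rw [if_pos hklt]
        have e2 : ε' (k+1) = -ε k := by simp only [hε']; rw [if_neg hnlt, hcast]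
        have dk : d1 m t k = t k := d1_apply_lt hklt
        have dk1 : d1 m t (k+1) = t k := by rw [d1_apply_ge hnlt, hcast]
        refine ⟨?_, ?_, fun _ => by rw [dk1, dk]⟩
        · intro p qq; rw [e1] at p; rw [e2] at qq; omega
        · intro p qq; rw [e1] at p; rw [e2] at qq; omega
      · by_cases hC : k.val + 1 < 2*m
        · have hge : ¬ k.val < m := by omega
          have hk1 : (k+1).val = k.val + 1 := val_succ_of_lt hC
          have hnlt : ¬ (k+1).val < m := by omega
          set j : ℕ := 2*m - 2 - k.val with hj
          have hj1 : 2*m - 1 - k.val = j + 1 := by omega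
          have hj2 : 2*m - 1 - (k+1).val = j := by omega
          have hcast : ((j + 1 : ℕ) : ZMod (2*m)) = ((j : ℕ) : ZMod (2*m)) + 1 := by
            push_cast; ring
          have e1 : ε' k = -ε (((j:ℕ) : ZMod (2*m)) + 1) := by
            simp only [hε']; rw [if_neg hge, hj1, hcast]
          have e2 : ε' (k+1) = -ε ((j:ℕ) : ZMod (2*m)) := by
            simp only [hε']; rw [if_neg hnlt, hj2]
          have dk : d1 m t k = t (((j:ℕ) : ZMod (2*m)) + 1) := by
            rw [d1_apply_ge hge, hj1, hcast]
          have dk1 : d1 m t (k+1) = t ((j:ℕ) : ZMod (2*m)) := by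
            rw [d1_apply_ge hnlt, hj2]
          refine ⟨?_, ?_, ?_⟩
          · intro p qq
            rw [e1] at p; rw [e2] at qq
            have hp : ε (((j:ℕ) : ZMod (2*m)) + 1) = -1 := by omega
            have hq : ε ((j:ℕ) : ZMod (2*m)) = -1 := by omega
            rw [dk, dk1, h3 _ hq hp]; ring
          · intro p qq
            rw [e1] at p; rw [e2] at qq
            have hp : ε (((j:ℕ) : ZMod (2*m)) + 1) = 1 := by omega
            have hq : ε ((j:ℕ) : ZMod (2*m)) = 1 := by omega
            rw [dk, dk1, h2 _ hq hp]; ring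
          · intro p
            rw [e1, e2] at p
            have hp : ε ((j:ℕ) : ZMod (2*m)) ≠ ε (((j:ℕ) : ZMod (2*m)) + 1) := by
              intro h; rw [h] at p; exact p rfl
            rw [dk, dk1, h4 _ hp]
        · have hD : k.val = 2*m - 1 := by omega
          have hge : ¬ k.val < m := by omega
          have hk0 : k + 1 = 0 := succ_eq_zero hD
          have hz : (0 : ZMod (2*m)).val < m := by rw [ZMod.val_zero]; omega
          have e2 : ε' (k+1) = ε 0 := by rw [hk0]; simp only [hε']; rw [if_pos hz]
          have e1 : ε' k = -ε 0 := by
            simp only [hε']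
            rw [if_neg hge, hD, show 2*m - 1 - (2*m-1) = 0 by omega, Nat.cast_zero]
          have dk : d1 m t k = t 0 := by
            rw [d1_apply_ge hge, hD, show 2*m - 1 - (2*m-1) = 0 by omega, Nat.cast_zero]
          have dk1 : d1 m t (k+1) = t 0 := by rw [hk0, d1_apply_lt hz]
          refine ⟨?_, ?_, fun _ => by rw [dk, dk1]⟩
          · intro p qq; rw [e1] at p; rw [e2] at qq; omega
          · intro p qq; rw [e1] at p; rw [e2] at qq; omega
  exact ⟨ε', hval, fun k => (main k).1, fun k => (main k).2.1, fun k => (main k).2.2⟩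

/-- The mirror map `k ↦ 2m-1-k`. -/
def mirror (m : ℕ) (k : ZMod (2*m)) : ZMod (2*m) := ((2*m - 1 - k.val : ℕ) : ZMod (2*m))

lemma mirror_val [NeZero (2*m)] (k : ZMod (2*m)) : (mirror m k).val = 2*m - 1 - k.val := by
  have h0 : 0 < 2*m := two_mul_pos
  exact ZMod.val_natCast_of_lt (by omega)

lemma mirror_mirror [NeZero (2*m)] (k : ZMod (2*m)) : mirror m (mirror m k) = k := by
  have hkv : k.val < 2*m := ZMod.val_lt k
  rw [mirror, mirror_val, show 2*m - 1 - (2*m - 1 - k.val) = k.val by omega, cast_val_eq]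

lemma q_d1 [NeZero (2*m)] (t : Word m) (i : ZMod (2*m)) :
    q m (d1 m t) i = 2 * ((univ.filter fun k : ZMod (2*m) => k.val < m ∧ t k = i).card) := by
  classical
  unfold q
  have hsplit := Finset.card_filter_add_card_filter_not
    (s := (univ : Finset (ZMod (2*m))).filter fun k => d1 m t k = i) (p := fun k => k.val < m)
  rw [Finset.filter_filter, Finset.filter_filter] at hsplit
  have e1 : ((univ : Finset (ZMod (2*m))).filter fun k => d1 m t k = i ∧ k.val < m)
      = univ.filter fun k => k.val < m ∧ t k = i := by
    apply Finset.filter_congr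
    intro k _
    constructor
    · rintro ⟨h, hk⟩; exact ⟨hk, by rwa [d1_apply_lt hk] at h⟩
    · rintro ⟨hk, h⟩; exact ⟨by rw [d1_apply_lt hk]; exact h, hk⟩
  have e2 : ((univ : Finset (ZMod (2*m))).filter fun k => d1 m t k = i ∧ ¬ k.val < m).card
      = (univ.filter fun k : ZMod (2*m) => k.val < m ∧ t k = i).card := by
    apply Finset.card_equiv (Function.Involutive.toPerm (mirror m) (show Function.Involutive (mirror m) from mirror_mirror))
    intro k
    simp only [Finset.mem_filter, Finset.mem_univ, true_and,
      Function.Involutive.coe_toPerm]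
    have hkv : k.val < 2*m := ZMod.val_lt k
    constructor
    · rintro ⟨h, hk⟩
      refine ⟨by rw [mirror_val]; omega, ?_⟩
      rw [d1_apply_ge hk] at h
      exact h
    · rintro ⟨hk, h⟩
      rw [mirror_val] at hk
      have hge : ¬ k.val < m := by omega
      exact ⟨by rw [d1_apply_ge hge]; exact h, hge⟩
  rw [e1, e2] at hsplit
  omega

lemma q_rot [NeZero (2*m)] (t : Word m) (r i : ZMod (2*m)) : q m (rot m t r) i = q m t i := by
  unfold q
  apply Finset.card_equiv (Equiv.addRight r)
  intro k
  rw [Finset.mem_filter, Finset.mem_filter]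
  simp [rot]

lemma q_d2 (hm : 1 ≤ m) [NeZero (2*m)] (t : Word m) (i : ZMod (2*m)) :
    q m (d2 m t) i = 2 * ((univ.filter fun k : ZMod (2*m) => ¬ k.val < m ∧ t k = i).card) := by
  rw [d2, q_d1]
  congr 1
  apply Finset.card_equiv (Equiv.addRight (m : ZMod (2*m)))
  intro k
  have h0 : 0 < 2*m := two_mul_pos
  have hkv : k.val < 2*m := ZMod.val_lt k
  have hmv : ((m : ℕ) : ZMod (2*m)).val = m := ZMod.val_natCast_of_lt (by omega)
  have hadd : (k + (m : ZMod (2*m))).val = (k.val + m) % (2*m) := by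
    rw [ZMod.val_add, hmv]
  rw [Finset.mem_filter, Finset.mem_filter]
  simp only [Finset.mem_filter, Finset.mem_univ, true_and, Equiv.coe_addRight, rot]
  constructor
  · rintro ⟨hk, h⟩
    refine ⟨?_, h⟩
    rw [hadd, Nat.mod_eq_of_lt (by omega)]
    omega
  · rintro ⟨hk, h⟩
    rw [hadd] at hk
    have hklt : k.val < m := by
      by_contra hc
      push_neg at hc
      have hmod : (k.val + m) % (2*m) = k.val - m := by
        rw [show k.val + m = (k.val - m) + 1 * (2*m) by omega, Nat.add_mul_mod_self_right,
          Nat.mod_eq_of_lt (by omega)]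
      omega
    exact ⟨hklt, h⟩

lemma q_split [NeZero (2*m)] (t : Word m) (i : ZMod (2*m)) :
    ((univ.filter fun k : ZMod (2*m) => k.val < m ∧ t k = i).card)
      + ((univ.filter fun k : ZMod (2*m) => ¬ k.val < m ∧ t k = i).card) = q m t i := by
  classical
  have hsplit := Finset.card_filter_add_card_filter_not
    (s := (univ : Finset (ZMod (2*m))).filter fun k => t k = i) (p := fun k => k.val < m)
  rw [Finset.filter_filter, Finset.filter_filter] at hsplit
  unfold q
  rw [← hsplit]
  congr 1
  · exact congrArg Finset.card (Finset.filter_congr fun k _ => and_comm)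
  · exact congrArg Finset.card (Finset.filter_congr fun k _ => and_comm)

lemma q_double (hm : 1 ≤ m) [NeZero (2*m)] (t : Word m) (i : ZMod (2*m)) :
    q m (d1 m t) i + q m (d2 m t) i = 2 * q m t i := by
  rw [q_d1, q_d2 hm, ← q_split t i]
  ring

/-- Number of non-constant steps of a word. -/
def nsteps (m : ℕ) [NeZero (2*m)] (t : Word m) : ℕ :=
  ((Finset.univ : Finset (ZMod (2*m))).filter fun k => t (k+1) ≠ t k).card

lemma step_d1_iff (hm : 1 ≤ m) [NeZero (2*m)] (t : Word m) (k : ZMod (2*m)) :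
    d1 m t (k+1) ≠ d1 m t k ↔
      ((k.val + 1 < m ∧ t (k+1) ≠ t k) ∨
       (m ≤ k.val ∧ k.val + 1 < 2*m ∧
         t (((2*m - 2 - k.val : ℕ) : ZMod (2*m)) + 1) ≠ t ((2*m - 2 - k.val : ℕ) : ZMod (2*m)))) := by
  have hkv : k.val < 2*m := ZMod.val_lt k
  by_cases hA : k.val + 1 < m
  · have hklt : k.val < m := by omega
    have hk1 : (k+1).val = k.val + 1 := val_succ_of_lt (by omega)
    rw [d1_apply_lt hklt, d1_apply_lt (show (k+1).val < m by omega)]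
    constructor
    · exact fun h => Or.inl ⟨hA, h⟩
    · rintro (⟨_, h⟩ | ⟨h, _⟩)
      · exact h
      · omega
  · by_cases hB : k.val + 1 = m
    · have hklt : k.val < m := by omega
      have hk1 : (k+1).val = m := by rw [val_succ_of_lt (by omega)]; omega
      have hnlt : ¬ (k+1).val < m := by omega
      have hcast : ((2*m - 1 - (k+1).val : ℕ) : ZMod (2*m)) = k := by
        rw [hk1, show 2*m - 1 - m = k.val by omega, cast_val_eq]
      rw [d1_apply_lt hklt, d1_apply_ge hnlt, hcast]
      constructor
      · intro h; exact absurd rfl h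
      · rintro (⟨h, _⟩ | ⟨h, _⟩) <;> omega
    · by_cases hC : k.val + 1 < 2*m
      · have hge : ¬ k.val < m := by omega
        have hk1 : (k+1).val = k.val + 1 := val_succ_of_lt hC
        have hnlt : ¬ (k+1).val < m := by omega
        have hj1 : 2*m - 1 - k.val = (2*m - 2 - k.val) + 1 := by omega
        have hj2 : 2*m - 1 - (k+1).val = 2*m - 2 - k.val := by omega
        have hcast : (((2*m - 2 - k.val) + 1 : ℕ) : ZMod (2*m))
            = ((2*m - 2 - k.val : ℕ) : ZMod (2*m)) + 1 := by push_cast; ring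
        rw [d1_apply_ge hge, d1_apply_ge hnlt, hj1, hj2, hcast]
        constructor
        · intro h
          exact Or.inr ⟨by omega, hC, fun hh => h (by rw [hh])⟩
        · rintro (⟨h, _⟩ | ⟨_, _, h⟩)
          · omega
          · exact fun hh => h (by rw [hh])
      · have hD : k.val = 2*m - 1 := by omega
        have hge : ¬ k.val < m := by omega
        have hk0 : k + 1 = 0 := succ_eq_zero hD
        have hz : (0 : ZMod (2*m)).val < m := by rw [ZMod.val_zero]; omega
        have dk : d1 m t k = t 0 := by
          rw [d1_apply_ge hge, hD, show 2*m - 1 - (2*m-1) = 0 by omega, Nat.cast_zero]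
        have dk1 : d1 m t (k+1) = t 0 := by rw [hk0, d1_apply_lt hz]
        rw [dk, dk1]
        constructor
        · intro h; exact absurd rfl h
        · rintro (⟨h, _⟩ | ⟨_, h, _⟩) <;> omega

lemma nsteps_d1 (hm : 1 ≤ m) [NeZero (2*m)] (t : Word m) :
    nsteps m (d1 m t)
      = 2 * ((univ.filter fun k : ZMod (2*m) => k.val + 1 < m ∧ t (k+1) ≠ t k).card) := by
  classical
  unfold nsteps
  have hchar : ((Finset.univ : Finset (ZMod (2*m))).filter fun k => d1 m t (k+1) ≠ d1 m t k)
      = (univ.filter fun k : ZMod (2*m) => k.val + 1 < m ∧ t (k+1) ≠ t k)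
        ∪ (univ.filter fun k : ZMod (2*m) => m ≤ k.val ∧ k.val + 1 < 2*m ∧
            t (((2*m - 2 - k.val : ℕ) : ZMod (2*m)) + 1) ≠ t ((2*m - 2 - k.val : ℕ) : ZMod (2*m))) := by
    rw [← Finset.filter_or]
    apply Finset.filter_congr
    intro k _
    exact step_d1_iff hm t k
  rw [hchar, Finset.card_union_of_disjoint]
  · have e2 : (univ.filter fun k : ZMod (2*m) => m ≤ k.val ∧ k.val + 1 < 2*m ∧
        t (((2*m - 2 - k.val : ℕ) : ZMod (2*m)) + 1) ≠ t ((2*m - 2 - k.val : ℕ) : ZMod (2*m))).card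
        = (univ.filter fun k : ZMod (2*m) => k.val + 1 < m ∧ t (k+1) ≠ t k).card := by
      apply Finset.card_nbij' (i := fun k => ((2*m - 2 - k.val : ℕ) : ZMod (2*m)))
        (j := fun k => ((2*m - 2 - k.val : ℕ) : ZMod (2*m)))
      · intro k hk
        simp only [Finset.mem_coe, Finset.mem_filter, Finset.mem_univ, true_and] at hk ⊢
        obtain ⟨h1, h2, h3⟩ := hk
        have hv : ((2*m - 2 - k.val : ℕ) : ZMod (2*m)).val = 2*m - 2 - k.val :=
          ZMod.val_natCast_of_lt (by omega)
        exact ⟨by omega, h3⟩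
      · intro k hk
        simp only [Finset.mem_coe, Finset.mem_filter, Finset.mem_univ, true_and] at hk ⊢
        obtain ⟨h1, h2⟩ := hk
        have hkv : k.val < 2*m := ZMod.val_lt k
        have hv : ((2*m - 2 - k.val : ℕ) : ZMod (2*m)).val = 2*m - 2 - k.val :=
          ZMod.val_natCast_of_lt (by omega)
        have hback : ((2*m - 2 - ((2*m - 2 - k.val : ℕ) : ZMod (2*m)).val : ℕ) : ZMod (2*m)) = k := by
          rw [hv, show 2*m - 2 - (2*m - 2 - k.val) = k.val by omega, cast_val_eq]
        refine ⟨by omega, by omega, ?_⟩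
        rw [hback]
        exact h2
      · intro k hk
        simp only [Finset.mem_coe, Finset.mem_filter, Finset.mem_univ, true_and] at hk
        obtain ⟨h1, h2, _⟩ := hk
        have hv : ((2*m - 2 - k.val : ℕ) : ZMod (2*m)).val = 2*m - 2 - k.val :=
          ZMod.val_natCast_of_lt (by omega)
        dsimp only
        rw [hv, show 2*m - 2 - (2*m - 2 - k.val) = k.val by omega, cast_val_eq]
      · intro k hk
        simp only [Finset.mem_coe, Finset.mem_filter, Finset.mem_univ, true_and] at hk
        obtain ⟨h1, _⟩ := hk
        have hkv : k.val < 2*m := ZMod.val_lt k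
        have hv : ((2*m - 2 - k.val : ℕ) : ZMod (2*m)).val = 2*m - 2 - k.val :=
          ZMod.val_natCast_of_lt (by omega)
        dsimp only
        rw [hv, show 2*m - 2 - (2*m - 2 - k.val) = k.val by omega, cast_val_eq]
    rw [e2]
    ring
  · rw [Finset.disjoint_left]
    intro k hk1 hk2
    simp only [Finset.mem_filter, Finset.mem_univ, true_and] at hk1 hk2
    omega

lemma card_window (hm : 1 ≤ m) [NeZero (2*m)] :
    ((univ : Finset (ZMod (2*m))).filter fun k => k.val + 1 < m).card = m - 1 := by
  rw [← Finset.card_range (m-1)]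
  apply Finset.card_nbij' (i := fun k : ZMod (2*m) => k.val)
    (j := fun a : ℕ => ((a : ℕ) : ZMod (2*m)))
  · intro k hk
    simp only [Finset.mem_coe, Finset.mem_filter, Finset.mem_univ, true_and] at hk
    simp only [Finset.mem_coe, Finset.mem_range]
    omega
  · intro a ha
    simp only [Finset.mem_coe, Finset.mem_range] at ha
    simp only [Finset.mem_coe, Finset.mem_filter, Finset.mem_univ, true_and]
    rw [ZMod.val_natCast_of_lt (by omega)]
    omega
  · intro k _
    exact cast_val_eq k
  · intro a ha
    simp only [Finset.mem_coe, Finset.mem_range] at ha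
    exact ZMod.val_natCast_of_lt (by omega)

lemma sum_window (hm : 1 ≤ m) [NeZero (2*m)] (t : Word m) :
    (∑ r : ZMod (2*m), ((univ : Finset (ZMod (2*m))).filter
        fun k => k.val + 1 < m ∧ t (k + r + 1) ≠ t (k + r)).card) = (m - 1) * nsteps m t := by
  classical
  calc (∑ r : ZMod (2*m), ((univ : Finset (ZMod (2*m))).filter
          fun k => k.val + 1 < m ∧ t (k + r + 1) ≠ t (k + r)).card)
      = ∑ r : ZMod (2*m), ∑ k : ZMod (2*m),
          if k.val + 1 < m ∧ t (k + r + 1) ≠ t (k + r) then 1 else 0 := by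
        apply Finset.sum_congr rfl
        intro r _
        exact Finset.card_filter _ _
    _ = ∑ k : ZMod (2*m), ∑ r : ZMod (2*m),
          if k.val + 1 < m ∧ t (k + r + 1) ≠ t (k + r) then 1 else 0 := Finset.sum_comm
    _ = ∑ k : ZMod (2*m), if k.val + 1 < m then nsteps m t else 0 := by
        apply Finset.sum_congr rfl
        intro k _
        by_cases hk : k.val + 1 < m
        · simp only [hk, true_and, if_true]
          rw [nsteps, Finset.card_filter]
          exact Fintype.sum_equiv (Equiv.addLeft k)
            (fun r => if t (k + r + 1) ≠ t (k + r) then 1 else 0)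
            (fun r => if t (r + 1) ≠ t r then 1 else 0)
            (fun r => by simp [Equiv.coe_addLeft]; by_cases hh : t (k + r + 1) = t (k + r) <;> simp [hh])
        · simp [hk]
    _ = (m - 1) * nsteps m t := by
        rw [Finset.sum_ite, Finset.sum_const, Finset.sum_const_zero, add_zero, smul_eq_mul,
          card_window hm]

lemma exists_good_rot (hm : 1 ≤ m) [NeZero (2*m)] (t : Word m) (h : nsteps m t ≠ 0) :
    ∃ r : ZMod (2*m), nsteps m (d1 m (rot m t r)) < nsteps m t := by
  classical
  by_contra hc
  push_neg at hc
  have key : ∀ r : ZMod (2*m), nsteps m (d1 m (rot m t r))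
      = 2 * (((univ : Finset (ZMod (2*m))).filter
          fun k => k.val + 1 < m ∧ t (k + r + 1) ≠ t (k + r)).card) := by
    intro r
    rw [nsteps_d1 hm]
    congr 1
    apply congrArg Finset.card
    apply Finset.filter_congr
    intro k _
    simp only [rot]
    rw [show k + 1 + r = k + r + 1 by ring]
  have hsum : (∑ _r : ZMod (2*m), nsteps m t) ≤ ∑ r : ZMod (2*m), nsteps m (d1 m (rot m t r)) :=
    Finset.sum_le_sum fun r _ => hc r
  rw [Finset.sum_const, Finset.card_univ, ZMod.card, smul_eq_mul] at hsum
  have htot : (∑ r : ZMod (2*m), nsteps m (d1 m (rot m t r))) = 2 * ((m-1) * nsteps m t) := by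
    rw [Finset.sum_congr rfl (fun r _ => key r), ← Finset.mul_sum, sum_window hm t]
  rw [htot] at hsum
  have h1 : 1 ≤ nsteps m t := Nat.one_le_iff_ne_zero.mpr h
  have hlt : (m-1) * nsteps m t < m * nsteps m t :=
    mul_lt_mul_of_pos_right (by omega) (by omega)
  have hfin : 2 * ((m-1) * nsteps m t) < 2 * m * nsteps m t := by
    rw [mul_assoc]
    exact mul_lt_mul_of_pos_left hlt (by norm_num)
  exact absurd hsum (not_le.mpr hfin)

lemma eq_const_of_nsteps_zero [NeZero (2*m)] {t : Word m} (h : nsteps m t = 0) :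
    t = fun _ => t 0 := by
  have hstep : ∀ k : ZMod (2*m), t (k+1) = t k := by
    intro k
    by_contra hc
    have hmem : k ∈ (Finset.univ : Finset (ZMod (2*m))).filter fun k => t (k+1) ≠ t k := by
      simp [hc]
    unfold nsteps at h
    rw [Finset.card_eq_zero] at h
    rw [h] at hmem
    exact absurd hmem (Finset.notMem_empty k)
  have hnat : ∀ j : ℕ, t ((j : ℕ) : ZMod (2*m)) = t 0 := by
    intro j
    induction j with
    | zero => norm_num
    | succ n ih =>
        rw [show (((n+1 : ℕ)) : ZMod (2*m)) = ((n:ℕ) : ZMod (2*m)) + 1 by push_cast; ring,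
          hstep, ih]
  funext k
  conv_lhs => rw [← cast_val_eq k]
  exact hnat k.val

lemma const_admissible (hm : 1 ≤ m) [NeZero (2*m)] (i : ZMod (2*m)) :
    Admissible m (fun _ => i) := by
  set ε : ZMod (2*m) → ℤ := fun k => if k.val % 2 = 0 then 1 else -1 with hε
  have hne : ∀ k : ZMod (2*m), ε k ≠ ε (k+1) := by
    intro k
    have hkv : k.val < 2*m := ZMod.val_lt k
    have hpar : (k+1).val % 2 ≠ k.val % 2 := by
      by_cases hD : k.val = 2*m - 1
      · rw [succ_eq_zero hD, ZMod.val_zero, hD]; omega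
      · rw [val_succ_of_lt (by omega)]; omega
    simp only [hε]
    split_ifs with h1 h2 <;> omega
  refine ⟨ε, ?_, ?_, ?_, fun k _ => rfl⟩
  · intro k; simp only [hε]; split_ifs <;> simp
  · intro k p qq; exact absurd (p.trans qq.symm) (hne k)
  · intro k p qq; exact absurd (p.trans qq.symm) (hne k)

lemma q_const [NeZero (2*m)] (jv i : ZMod (2*m)) :
    q m (fun _ => jv) i = if jv = i then 2*m else 0 := by
  unfold q
  split_ifs with h
  · simp only [h, eq_self_iff_true, Finset.filter_true, Finset.card_univ, ZMod.card]
  · rw [Finset.filter_false_of_mem (fun _ _ => h), Finset.card_empty]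

end Aux

/-- If `f` is nonnegative on admissible words, rotation invariant, and satisfies the
doubling inequality `2 f(t) ≥ f(d₁ t) + f(d₂ t)`, then
`2m · f(t) ≥ Σ_i q_i(t) · f(c_i)` for every admissible word `t`. -/
theorem volume_reduction (m : ℕ) (hm : 1 ≤ m) [NeZero (2*m)] (f : Word m → ℝ)
    (hnonneg : ∀ t, Admissible m t → 0 ≤ f t)
    (hrotinv : ∀ (t : Word m) (r : ZMod (2*m)), Admissible m t → f (rot m t r) = f t)
    (hdouble : ∀ t, Admissible m t → f (d1 m t) + f (d2 m t) ≤ 2 * f t)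
    (t : Word m) (ht : Admissible m t) :
    (∑ i : ZMod (2*m), (q m t i : ℝ) * f (fun _ => i)) ≤ ((2*m : ℕ) : ℝ) * f t := by
  classical
  set g : Word m → ℝ :=
    fun s => ((2*m : ℕ) : ℝ) * f s - ∑ i : ZMod (2*m), (q m s i : ℝ) * f (fun _ => i) with hg
  suffices h : 0 ≤ g t by
    simp only [hg] at h
    linarith
  have hsumconst : ∀ jv : ZMod (2*m),
      (∑ i : ZMod (2*m), (q m (fun _ => jv) i : ℝ) * f (fun _ => i))
        = ((2*m : ℕ) : ℝ) * f (fun _ => jv) := by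
    intro jv
    rw [Finset.sum_eq_single jv]
    · rw [q_const, if_pos rfl]
    · intro b _ hb
      rw [q_const, if_neg (fun hh => hb hh.symm)]
      simp
    · intro hh; exact absurd (Finset.mem_univ jv) hh
  -- the finite set of admissible words
  have htA : t ∈ (Finset.univ : Finset (Word m)).filter (fun s => Admissible m s) := by
    simp [ht]
  obtain ⟨s₀, hs₀, hs₀min⟩ := Finset.exists_min_image
    ((Finset.univ : Finset (Word m)).filter (fun s => Admissible m s)) g ⟨t, htA⟩
  obtain ⟨s₁, hs₁, hs₁min⟩ := Finset.exists_min_image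
    (((Finset.univ : Finset (Word m)).filter (fun s => Admissible m s)).filter
      (fun s => g s = g s₀)) (nsteps m) ⟨s₀, Finset.mem_filter.mpr ⟨hs₀, rfl⟩⟩
  have hs₁' := Finset.mem_filter.mp hs₁
  have hadm₁ : Admissible m s₁ := (Finset.mem_filter.mp hs₁'.1).2
  have hmin : ∀ s : Word m, Admissible m s → g s₁ ≤ g s := by
    intro s hs
    rw [hs₁'.2]
    exact hs₀min s (by simp [hs])
  have hzero : nsteps m s₁ = 0 := by
    by_contra hne
    obtain ⟨r, hr⟩ := exists_good_rot hm s₁ hne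
    set u := rot m s₁ r with hu
    have huadm : Admissible m u := rot_admissible hadm₁ r
    have h1adm : Admissible m (d1 m u) := d1_admissible hm huadm
    have h2adm : Admissible m (d2 m u) := by
      rw [d2]
      exact d1_admissible hm (rot_admissible huadm _)
    have hgu : g u = g s₁ := by
      simp only [hg]
      rw [hrotinv s₁ r hadm₁]
      congr 1
      apply Finset.sum_congr rfl
      intro i _
      rw [q_rot]
    have hQ : (∑ i : ZMod (2*m), (q m (d1 m u) i : ℝ) * f (fun _ => i))
          + (∑ i : ZMod (2*m), (q m (d2 m u) i : ℝ) * f (fun _ => i))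
        = 2 * ∑ i : ZMod (2*m), (q m u i : ℝ) * f (fun _ => i) := by
      rw [← Finset.sum_add_distrib, Finset.mul_sum]
      apply Finset.sum_congr rfl
      intro i _
      have hq := q_double hm u i
      have hcast : (q m (d1 m u) i : ℝ) + (q m (d2 m u) i : ℝ) = 2 * (q m u i : ℝ) := by
        exact_mod_cast congrArg (fun n : ℕ => (n : ℝ)) hq
      calc (q m (d1 m u) i : ℝ) * f (fun _ => i) + (q m (d2 m u) i : ℝ) * f (fun _ => i)
          = ((q m (d1 m u) i : ℝ) + (q m (d2 m u) i : ℝ)) * f (fun _ => i) := by ring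
        _ = 2 * ((q m u i : ℝ) * f (fun _ => i)) := by rw [hcast]; ring
    have hdbl := hdouble u huadm
    have hgd : g (d1 m u) + g (d2 m u) ≤ 2 * g u := by
      simp only [hg]
      have hmul : ((2*m : ℕ) : ℝ) * f (d1 m u) + ((2*m : ℕ) : ℝ) * f (d2 m u)
          ≤ ((2*m : ℕ) : ℝ) * (2 * f u) := by
        rw [← mul_add]
        exact mul_le_mul_of_nonneg_left hdbl (by positivity)
      linarith
    have hge2 : g s₁ ≤ g (d2 m u) := hmin _ h2adm
    have heq : g (d1 m u) = g s₁ :=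
      le_antisymm (by linarith [hgu ▸ hgd]) (hmin _ h1adm)
    have hmem : d1 m u ∈ ((Finset.univ : Finset (Word m)).filter (fun s => Admissible m s)).filter
        (fun s => g s = g s₀) :=
      Finset.mem_filter.mpr ⟨by simp [h1adm], heq.trans hs₁'.2⟩
    have hle := hs₁min _ hmem
    omega
  have hconst : s₁ = fun _ => s₁ 0 := eq_const_of_nsteps_zero hzero
  have hgs₁ : g s₁ = 0 := by
    rw [hconst]
    simp only [hg]
    rw [hsumconst (s₁ 0)]
    ring
  have := hmin t ht
  linarith
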